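/- In the conditioned bunkbed model on G_1 with T=\{2,5,8\} at p=1/2, the events A_2 = \{1^-\to 9^-\} \cap F \cap \{1^- \not\to 5^\pm\} and B_2 = \{1^-\to 9^+\} \cap F \cap \{1^- \not\to 5^\pm\} satisfy \mathbb{P}(A_2) = \mathbb{P}(B_2), via the mirroring M(\cdot, \{(8,9)\}). -/

import Mathlib

/-- Edges of the bunkbed graph of a directed graph on vertex type `V`:
`horiz u v ε` is the copy of the directed edge `(u,v)` in bunk `ε`
(`false` = lower bunk `-`, `true` = upper bunk `+`); `vert w` is the
bidirected vertical edge `(w⁻, w⁺)`. -/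
inductive BBEdge (V : Type) : Type
  | horiz : V → V → Bool → BBEdge V
  | vert  : V → BBEdge V
deriving DecidableEq

/-- The `F`-mirroring map on single edges: vertical edges are fixed, a horizontal
edge whose shadow lies in `F` is sent to its mirrored copy in the other bunk, and
horizontal edges with shadow outside `F` are fixed. -/
def mir {V : Type} [DecidableEq V] (F : Finset (V × V)) : BBEdge V → BBEdge V
  | .horiz u v ε => if (u, v) ∈ F then .horiz u v (!ε) else .horiz u v ε
  | .vert w => .vert w

/-- The `F`-mirrored subgraph `M(H,F)`. -/
def M {V : Type} [DecidableEq V] (H : Finset (BBEdge V)) (F : Finset (V × V)) :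
    Finset (BBEdge V) :=
  H.image (mir F)
/-- The edge set of the bunkbed graph of the directed graph with vertex set `Vs`
and edge set `E`: the vertical edges at all vertices together with the two
horizontal copies of each edge. -/
def bbEdges {V : Type} [DecidableEq V] (Vs : Finset V) (E : Finset (V × V)) :
    Finset (BBEdge V) :=
  Vs.image BBEdge.vert ∪ E.image (fun p => BBEdge.horiz p.1 p.2 false) ∪
    E.image (fun p => BBEdge.horiz p.1 p.2 true)
/-- Probability of the event `A` under uniform (`p = 1/2`) Bernoulli bond
percolation on the edge set `s`: a subgraph is a uniformly random subset of `s`. -/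
noncomputable def Pr {V : Type} [DecidableEq V] (s : Finset (BBEdge V))
    (A : Finset (BBEdge V) → Prop) : ℚ :=
  letI := Classical.decPred A
  ((s.powerset.filter A).card : ℚ) / (s.powerset.card : ℚ)

/-- Conditional probability of `A` given `C` under uniform percolation on `s`. -/
noncomputable def CondPr {V : Type} [DecidableEq V] (s : Finset (BBEdge V))
    (C A : Finset (BBEdge V) → Prop) : ℚ :=
  Pr s (fun H => A H ∧ C H) / Pr s C

/-- One step of directed traversal in a subgraph `H` of the bunkbed graph:
horizontal edges are used in their direction within a bunk, and vertical edges
may be traversed in both directions. Vertices of the bunkbed graph are pairs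
`(w, ε)` with `ε : Bool` the bunk label (`false` = `-`, `true` = `+`). -/
def bbStep {V : Type} [DecidableEq V] (H : Finset (BBEdge V)) :
    V × Bool → V × Bool → Prop := fun a b =>
  (a.1 = b.1 ∧ a.2 ≠ b.2 ∧ BBEdge.vert a.1 ∈ H) ∨
    (a.2 = b.2 ∧ BBEdge.horiz a.1 b.1 a.2 ∈ H)

/-- Directed reachability `x → y` in a subgraph of the bunkbed graph. -/
def bbReach {V : Type} [DecidableEq V] (H : Finset (BBEdge V))
    (a b : V × Bool) : Prop :=
  Relation.ReflTransGen (bbStep H) a b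
/-- The conditioning event of the conditioned bunkbed model `𝓔_T`: all vertices
of `T` are posts. -/
def postCond {V : Type} [DecidableEq V] (T : Finset V)
    (H : Finset (BBEdge V)) : Prop :=
  ∀ t ∈ T, BBEdge.vert t ∈ H

/-- The edge set of the graph `G₁` of Przybyłowski's counterexample, on
vertices `1,…,9`. -/
def E1 : Finset (ℕ × ℕ) :=
  {(1,2), (1,4), (2,3), (3,4), (4,5), (3,7), (5,6), (6,7), (6,9), (7,8), (8,9)}

/-- The vertex set of `G₁`. -/
def V1 : Finset ℕ := {1, 2, 3, 4, 5, 6, 7, 8, 9}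

/-- The conditioning set `T = {2,5,8}`. -/
def T1 : Finset ℕ := {2, 5, 8}

/-- The edge set of the bunkbed graph of `G₁`. -/
def s1 : Finset (BBEdge ℕ) := bbEdges V1 E1

/-- The event `F` that the post set is exactly `{2,5,8}`. -/
def exactPosts (H : Finset (BBEdge ℕ)) : Prop :=
  ∀ w : ℕ, BBEdge.vert w ∈ H ↔ w ∈ T1


/-! ### Auxiliary lemmas -/

/-- The mirrored edge set for the mirroring `M(·, {(8,9)})`. -/
def F8 : Finset (ℕ × ℕ) := {(8, 9)}

/-- The two horizontal copies of the mirrored edge. -/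
def bad : Finset (BBEdge ℕ) := {BBEdge.horiz 8 9 false, BBEdge.horiz 8 9 true}

lemma mir_mir (e : BBEdge ℕ) : mir F8 (mir F8 e) = e := by
  cases e with
  | horiz u v ε =>
      by_cases h : (u, v) ∈ F8 <;> simp [mir, h]
  | vert w => rfl

lemma mem_M_iff {H : Finset (BBEdge ℕ)} {e : BBEdge ℕ} :
    e ∈ M H F8 ↔ mir F8 e ∈ H := by
  constructor
  · rintro h
    rcases Finset.mem_image.1 h with ⟨x, hx, rfl⟩
    rwa [mir_mir]
  · intro h
    exact Finset.mem_image.2 ⟨mir F8 e, h, mir_mir e⟩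

lemma mir_not_bad {e : BBEdge ℕ} (he : e ∉ bad) : mir F8 e = e := by
  cases e with
  | horiz u v ε =>
      by_cases h : (u, v) ∈ F8
      · exfalso
        apply he
        have : u = 8 ∧ v = 9 := by simpa [F8, Prod.ext_iff] using h
        rcases this with ⟨rfl, rfl⟩
        cases ε <;> simp [bad]
      · simp [mir, h]
  | vert w => rfl

lemma mir_vert (w : ℕ) : mir F8 (BBEdge.vert w) = BBEdge.vert w := rfl

lemma vert_mem_M {H : Finset (BBEdge ℕ)} {w : ℕ} :
    BBEdge.vert w ∈ M H F8 ↔ BBEdge.vert w ∈ H := by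
  rw [mem_M_iff, mir_vert]

lemma M_M (H : Finset (BBEdge ℕ)) : M (M H F8) F8 = H := by
  ext e
  rw [mem_M_iff, mem_M_iff, mir_mir]

lemma mir_mem_s1 {e : BBEdge ℕ} (he : e ∈ s1) : mir F8 e ∈ s1 := by
  revert he
  revert e
  decide

lemma M_subset_s1 {H : Finset (BBEdge ℕ)} (hH : H ⊆ s1) : M H F8 ⊆ s1 := by
  intro e he
  rcases Finset.mem_image.1 he with ⟨x, hx, rfl⟩
  exact mir_mem_s1 (hH hx)

lemma M_sdiff_bad (H : Finset (BBEdge ℕ)) : (M H F8) \ bad = H \ bad := by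
  ext e
  simp only [Finset.mem_sdiff, mem_M_iff]
  constructor
  · rintro ⟨h1, h2⟩
    rw [mir_not_bad h2] at h1
    exact ⟨h1, h2⟩
  · rintro ⟨h1, h2⟩
    rw [mir_not_bad h2]
    exact ⟨h1, h2⟩

lemma exactPosts_M {H : Finset (BBEdge ℕ)} : exactPosts (M H F8) ↔ exactPosts H := by
  unfold exactPosts
  simp only [vert_mem_M]

lemma postCond_M {H : Finset (BBEdge ℕ)} : postCond T1 (M H F8) ↔ postCond T1 H := by
  unfold postCond
  simp only [vert_mem_M]

lemma horiz_mem_s1 {u v : ℕ} {ε : Bool} (h : BBEdge.horiz u v ε ∈ s1) : (u, v) ∈ E1 := by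
  simp only [s1, bbEdges, Finset.mem_union, Finset.mem_image] at h
  rcases h with (h | ⟨p, hp, he⟩) | ⟨p, hp, he⟩
  · rcases h with ⟨w, _, he⟩; cases he
  · cases he; exact hp
  · cases he; exact hp

lemma bbReach_mono {H H' : Finset (BBEdge ℕ)} (h : H ⊆ H') {a b : ℕ × Bool}
    (hr : bbReach H a b) : bbReach H' a b := by
  refine Relation.ReflTransGen.mono ?_ a b hr
  intro x y hxy
  rcases hxy with ⟨h1, h2, h3⟩ | ⟨h1, h2⟩
  · exact Or.inl ⟨h1, h2, h h3⟩
  · exact Or.inr ⟨h1, h h2⟩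

lemma no_step_from_9 {H : Finset (BBEdge ℕ)} (hH : H ⊆ s1) (hp : exactPosts H)
    {ε : Bool} {c : ℕ × Bool} : ¬ bbStep H (9, ε) c := by
  rintro (⟨_, _, h3⟩ | ⟨_, h2⟩)
  · have := (hp 9).1 h3
    simp [T1] at this
  · have := horiz_mem_s1 (hH h2)
    simp [E1, Prod.ext_iff] at this

lemma reach_truncate {H : Finset (BBEdge ℕ)} (hH : H ⊆ s1) (hp : exactPosts H)
    {a b : ℕ × Bool} (hb : b.1 ≠ 9) (hr : bbReach H a b) : bbReach (H \ bad) a b := by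
  induction hr using Relation.ReflTransGen.head_induction_on with
  | refl => exact Relation.ReflTransGen.refl
  | head hstep hr ih =>
      rename_i x y
      rcases hstep with ⟨h1, h2, h3⟩ | ⟨h1, h2⟩
      · refine Relation.ReflTransGen.head (Or.inl ⟨h1, h2, ?_⟩) ih
        refine Finset.mem_sdiff.2 ⟨h3, ?_⟩
        simp [bad]
      · -- horizontal step; show the edge is not bad
        by_cases hbad : BBEdge.horiz x.1 y.1 x.2 ∈ bad
        · -- then y.1 = 9, but from y we reach b with b.1 ≠ 9: contradiction
          have hy9 : y.1 = 9 := by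
            have : (x.1 = 8 ∧ y.1 = 9 ∧ x.2 = false) ∨ (x.1 = 8 ∧ y.1 = 9 ∧ x.2 = true) := by
              simpa [bad, BBEdge.horiz.injEq] using hbad
            rcases this with ⟨_, h, _⟩ | ⟨_, h, _⟩ <;> exact h
          rcases (Relation.ReflTransGen.cases_head hr) with rfl | ⟨c, hc, _⟩
          · exact absurd hy9 hb
          · have : y = (9, y.2) := by
              cases y; simp_all
            rw [this] at hc
            exact absurd hc (no_step_from_9 hH hp)
        · exact Relation.ReflTransGen.head (Or.inr ⟨h1, Finset.mem_sdiff.2 ⟨h2, hbad⟩⟩) ih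

lemma not_reach_6 {H : Finset (BBEdge ℕ)} (hH : H ⊆ s1) (hp : exactPosts H)
    (hN : ¬ (bbReach H (1, false) (5, false) ∨ bbReach H (1, false) (5, true)))
    {δ : Bool} : ¬ bbReach H (1, false) (6, δ) := by
  intro hr
  rcases (Relation.ReflTransGen.cases_tail hr) with heq | ⟨c, hc, hstep⟩
  · simp at heq
  · rcases hstep with ⟨h1, h2, h3⟩ | ⟨h1, h2⟩
    · rw [show c.1 = 6 from h1] at h3
      have := (hp 6).1 h3
      simp [T1] at this
    · have hE := horiz_mem_s1 (hH h2)
      have hc1 : c.1 = 5 := by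
        simp only [E1, Finset.mem_insert, Finset.mem_singleton, Prod.ext_iff] at hE
        omega
      apply hN
      have : c = (5, δ) := by
        cases c; simp_all
      rw [this] at hc
      cases δ
      · exact Or.inl hc
      · exact Or.inr hc

lemma reach9_iff {H : Finset (BBEdge ℕ)} (hH : H ⊆ s1) (hp : exactPosts H)
    (hN : ¬ (bbReach H (1, false) (5, false) ∨ bbReach H (1, false) (5, true)))
    {ε : Bool} :
    bbReach H (1, false) (9, ε) ↔
      (bbReach (H \ bad) (1, false) (8, false) ∧ BBEdge.horiz 8 9 ε ∈ H) := by
  have hvert8 : BBEdge.vert 8 ∈ H := (hp 8).2 (by simp [T1])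
  constructor
  · intro hr
    rcases (Relation.ReflTransGen.cases_tail hr) with heq | ⟨c, hc, hstep⟩
    · simp at heq
    · rcases hstep with ⟨h1, h2, h3⟩ | ⟨h1, h2⟩
      · rw [show c.1 = 9 from h1] at h3
        have := (hp 9).1 h3
        simp [T1] at this
      · have hE := horiz_mem_s1 (hH h2)
        have hc1 : c.1 = 6 ∨ c.1 = 8 := by
          simp only [E1, Finset.mem_insert, Finset.mem_singleton, Prod.ext_iff] at hE
          omega
        have hcε : c = (c.1, ε) := by cases c; simp_all
        rcases hc1 with h6 | h8
        · exfalso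
          rw [hcε, h6] at hc
          exact not_reach_6 hH hp hN hc
        · rw [hcε, h8] at hc h2
          have hK : bbReach (H \ bad) (1, false) (8, ε) :=
            reach_truncate hH hp (by simp) hc
          have hv8K : BBEdge.vert 8 ∈ H \ bad :=
            Finset.mem_sdiff.2 ⟨hvert8, by simp [bad]⟩
          have h2' : BBEdge.horiz 8 9 ε ∈ H := h2
          refine ⟨?_, h2'⟩
          cases ε
          · exact hK
          · exact Relation.ReflTransGen.tail hK
              (Or.inl ⟨rfl, by simp, hv8K⟩)
  · rintro ⟨hK, hedge⟩
    have h8 : bbReach H (1, false) (8, false) :=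
      bbReach_mono (Finset.sdiff_subset) hK
    have h8ε : bbReach H (1, false) (8, ε) := by
      cases ε
      · exact h8
      · exact Relation.ReflTransGen.tail h8 (Or.inl ⟨rfl, by simp, hvert8⟩)
    exact Relation.ReflTransGen.tail h8ε (Or.inr ⟨rfl, hedge⟩)

lemma reach5_iff_K {H : Finset (BBEdge ℕ)} (hH : H ⊆ s1) (hp : exactPosts H) {δ : Bool} :
    bbReach H (1, false) (5, δ) ↔ bbReach (H \ bad) (1, false) (5, δ) := by
  constructor
  · exact fun h => reach_truncate hH hp (by simp) h
  · exact fun h => bbReach_mono (Finset.sdiff_subset) h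

/-- The main iff: the event `A₂ ∩ {posts ⊇ T}` holds for `H` iff the event
`B₂ ∩ {posts ⊇ T}` holds for `M(H, {(8,9)})`. -/
lemma key_iff {H : Finset (BBEdge ℕ)} (hH : H ⊆ s1) :
    ((bbReach H (1, false) (9, false) ∧ exactPosts H ∧
        ¬ (bbReach H (1, false) (5, false) ∨ bbReach H (1, false) (5, true))) ∧
      postCond T1 H) ↔
    ((bbReach (M H F8) (1, false) (9, true) ∧ exactPosts (M H F8) ∧
        ¬ (bbReach (M H F8) (1, false) (5, false) ∨ bbReach (M H F8) (1, false) (5, true))) ∧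
      postCond T1 (M H F8)) := by
  have hMs : M H F8 ⊆ s1 := M_subset_s1 hH
  constructor
  · rintro ⟨⟨hr9, hp, hN⟩, hpc⟩
    have hpM : exactPosts (M H F8) := exactPosts_M.2 hp
    have hNM : ¬ (bbReach (M H F8) (1, false) (5, false) ∨
        bbReach (M H F8) (1, false) (5, true)) := by
      rintro (h | h)
      · exact hN (Or.inl ((reach5_iff_K hH hp).2
          (by rw [← M_sdiff_bad]; exact (reach5_iff_K hMs hpM).1 h)))
      · exact hN (Or.inr ((reach5_iff_K hH hp).2
          (by rw [← M_sdiff_bad]; exact (reach5_iff_K hMs hpM).1 h)))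
    refine ⟨⟨?_, hpM, hNM⟩, postCond_M.2 hpc⟩
    rw [reach9_iff hMs hpM hNM]
    rw [reach9_iff hH hp hN] at hr9
    constructor
    · rw [M_sdiff_bad]; exact hr9.1
    · rw [mem_M_iff]
      have : mir F8 (BBEdge.horiz 8 9 true) = BBEdge.horiz 8 9 false := by
        simp [mir, F8]
      rw [this]; exact hr9.2
  · rintro ⟨⟨hr9, hpM, hNM⟩, hpcM⟩
    have hp : exactPosts H := exactPosts_M.1 hpM
    have hN : ¬ (bbReach H (1, false) (5, false) ∨ bbReach H (1, false) (5, true)) := by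
      rintro (h | h)
      · exact hNM (Or.inl ((reach5_iff_K hMs hpM).2
          (by rw [M_sdiff_bad]; exact (reach5_iff_K hH hp).1 h)))
      · exact hNM (Or.inr ((reach5_iff_K hMs hpM).2
          (by rw [M_sdiff_bad]; exact (reach5_iff_K hH hp).1 h)))
    refine ⟨⟨?_, hp, hN⟩, postCond_M.1 hpcM⟩
    rw [reach9_iff hH hp hN]
    rw [reach9_iff hMs hpM hNM] at hr9
    constructor
    · rw [← M_sdiff_bad]; exact hr9.1
    · have := hr9.2
      rw [mem_M_iff] at this
      have h2 : mir F8 (BBEdge.horiz 8 9 true) = BBEdge.horiz 8 9 false := by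
        simp [mir, F8]
      rwa [h2] at this

lemma Pr_eq_of_bij (s : Finset (BBEdge ℕ)) (A B : Finset (BBEdge ℕ) → Prop)
    (f : Finset (BBEdge ℕ) → Finset (BBEdge ℕ))
    (hmap : ∀ H, H ⊆ s → f H ⊆ s) (hinv : ∀ H, H ⊆ s → f (f H) = H)
    (hiff : ∀ H, H ⊆ s → (A H ↔ B (f H))) : Pr s A = Pr s B := by
  unfold Pr
  congr 2
  refine Finset.card_nbij' f f ?_ ?_ ?_ ?_
  · intro H hH
    simp only [Finset.coe_filter, Set.mem_setOf_eq, Finset.mem_coe, Finset.mem_filter, Finset.mem_powerset] at *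
    exact ⟨hmap H hH.1, (hiff H hH.1).1 hH.2⟩
  · intro H hH
    simp only [Finset.coe_filter, Set.mem_setOf_eq, Finset.mem_coe, Finset.mem_filter, Finset.mem_powerset] at *
    have hfs := hmap H hH.1
    refine ⟨hfs, (hiff (f H) hfs).2 ?_⟩
    rw [hinv H hH.1]
    exact hH.2
  · intro H hH
    simp only [Finset.coe_filter, Set.mem_setOf_eq, Finset.mem_coe, Finset.mem_filter, Finset.mem_powerset] at hH
    exact hinv H hH.1
  · intro H hH
    simp only [Finset.coe_filter, Set.mem_setOf_eq, Finset.mem_coe, Finset.mem_filter, Finset.mem_powerset] at hH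
    exact hinv H hH.1

/-- in the conditioned bunkbed model `𝓔_T` on `G₁` with `T = {2,5,8}`
at `p = 1/2`, the events
`A₂ = {1⁻ → 9⁻} ∩ F ∩ {1⁻ ↛ 5^±}` and `B₂ = {1⁻ → 9⁺} ∩ F ∩ {1⁻ ↛ 5^±}`
(where `F` is the event that the posts are exactly `{2,5,8}`) satisfy
`ℙ(A₂) = ℙ(B₂)`. -/
theorem A2_eq_B2 :
    CondPr s1 (postCond T1) (fun H => bbReach H (1, false) (9, false) ∧
      exactPosts H ∧
      ¬ (bbReach H (1, false) (5, false) ∨ bbReach H (1, false) (5, true))) =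
    CondPr s1 (postCond T1) (fun H => bbReach H (1, false) (9, true) ∧
      exactPosts H ∧
      ¬ (bbReach H (1, false) (5, false) ∨ bbReach H (1, false) (5, true))) := by
  unfold CondPr
  congr 1
  refine Pr_eq_of_bij s1 _ _ (fun H => M H F8)
    (fun H hH => M_subset_s1 hH) (fun H _ => M_M H) (fun H hH => key_iff hH)
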